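/- Any ℝ-algebra automorphism of the octonions preserves the inner product, preserves the subspace Im(𝕆), and preserves the 3-form λ(a,b,c) = ([a,b],c) on Im(𝕆). -/

import Mathlib

noncomputable section

/-- The octonions, realized via the Cayley–Dickson construction as pairs of quaternions. -/
abbrev Octo : Type := Quaternion ℝ × Quaternion ℝ

namespace Octo

/-- Octonion multiplication (Cayley–Dickson): `(a,b)(c,d) = (ac - d̄b, da + bc̄)`. -/
def omul (x y : Octo) : Octo :=
  (x.1 * y.1 - star y.2 * x.2, y.2 * x.1 + x.2 * star y.1)

/-- The octonion unit. -/
def oone : Octo := (1, 0)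

/-- Octonion conjugation. -/
def oconj (x : Octo) : Octo := (star x.1, -x.2)

/-- Real part of an octonion. -/
def ore (x : Octo) : ℝ := x.1.re

/-- The standard inner product `(x,y) = re (x * ȳ)`. -/
def oinner (x y : Octo) : ℝ := ore (omul x (oconj y))

/-- An octonion is pure imaginary if `x̄ = -x`. -/
def IsIm (x : Octo) : Prop := oconj x = -x

/-- The commutator `[a,b] = a*b - b*a`. -/
def comm (a b : Octo) : Octo := omul a b - omul b a

/-- The octonionic vector (cross) product on imaginary octonions: half the commutator. -/
def cross (a b : Octo) : Octo := (1/2 : ℝ) • comm a b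

/-- The 3-form `λ(a,b,c) = ([a,b],c)`. -/
def lam (a b c : Octo) : ℝ := oinner (comm a b) c

end Octo

namespace OctoAux
open Octo

lemma quad (x : Octo) : omul x x = (2 * ore x) • x - oinner x x • oone := by
  obtain ⟨a, b⟩ := x
  simp only [omul, ore, oinner, oconj, oone, Prod.smul_mk, Prod.mk_sub_mk, smul_zero]
  refine Prod.ext ?_ ?_ <;> ext <;>
    simp [Quaternion.re_mul, Quaternion.imI_mul, Quaternion.imJ_mul, Quaternion.imK_mul,
      Quaternion.re_one, Quaternion.imI_one, Quaternion.imJ_one, Quaternion.imK_one] <;> ring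

lemma oinner_polar (x y : Octo) :
    oinner x y = (oinner (x+y) (x+y) - oinner x x - oinner y y)/2 := by
  obtain ⟨a,b⟩ := x; obtain ⟨c,d⟩ := y
  simp [oinner, ore, omul, oconj, Quaternion.re_mul]; ring

lemma isIm_iff (x : Octo) : IsIm x ↔ ore x = 0 := by
  obtain ⟨a,b⟩ := x
  have h1 : (oconj (a,b) = -(a,b)) ↔ star a = -a := by
    simp [oconj, Prod.ext_iff]
  rw [IsIm, h1]
  constructor
  · intro h
    have := congrArg QuaternionAlgebra.re h
    simp [ore] at this ⊢
    linarith
  · intro h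
    simp [ore] at h
    ext <;> simp [h]

lemma ore_smul_oone (c : ℝ) : ore (c • oone) = c := by simp [ore, oone, Quaternion.re_one]

lemma oone_ne_zero : (oone : Octo) ≠ 0 := by
  simp [oone, Prod.ext_iff]

end OctoAux

open Octo in
/-- Any `ℝ`-algebra automorphism of the octonions preserves the inner product, the imaginary
subspace, and the 3-form `λ(a,b,c) = ([a,b],c)`. -/
theorem automorphism_preserves_structures (φ : Octo ≃ₗ[ℝ] Octo)
    (h1 : φ oone = oone) (hmul : ∀ x y : Octo, φ (omul x y) = omul (φ x) (φ y)) :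
    (∀ x y : Octo, oinner (φ x) (φ y) = oinner x y) ∧
    (∀ x : Octo, IsIm x → IsIm (φ x)) ∧
    (∀ a b c : Octo, IsIm a → IsIm b → IsIm c → lam (φ a) (φ b) (φ c) = lam a b c) := by
  open OctoAux in
  -- Key: trace and norm are preserved
  have key : ∀ x : Octo, ore (φ x) = ore x ∧ oinner (φ x) (φ x) = oinner x x := by
    intro x
    have hq : φ (omul x x) = (2 * ore x) • φ x - oinner x x • oone := by
      rw [quad x, map_sub, map_smul, map_smul, h1]
    have hq' : omul (φ x) (φ x) = (2 * ore (φ x)) • φ x - oinner (φ x) (φ x) • oone :=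
      quad (φ x)
    rw [hmul, hq'] at hq
    have hcomb : (2 * ore (φ x) - 2 * ore x) • φ x
        = (oinner (φ x) (φ x) - oinner x x) • oone := by
      have := sub_eq_zero.mpr hq
      rw [sub_sub_sub_comm] at this
      rw [sub_smul, sub_smul]
      linear_combination (norm := module) this
    by_cases ht : ore (φ x) = ore x
    · refine ⟨ht, ?_⟩
      rw [ht, sub_self, zero_smul] at hcomb
      have := (smul_eq_zero.mp hcomb.symm).resolve_right oone_ne_zero
      linarith
    · exfalso
      set t : ℝ := 2 * ore (φ x) - 2 * ore x with htdef
      have htne : t ≠ 0 := by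
        intro h; apply ht; rw [htdef] at h; linarith
      set s : ℝ := oinner (φ x) (φ x) - oinner x x
      have hφx : φ x = (s / t) • oone := by
        have : φ x = t⁻¹ • (t • φ x) := by
          rw [smul_smul, inv_mul_cancel₀ htne, one_smul]
        rw [this, hcomb, smul_smul, div_eq_inv_mul]
      have hx : x = (s / t) • oone := by
        apply φ.injective
        rw [hφx, map_smul, h1]
      apply ht
      rw [hφx, hx]
  have hinner : ∀ x y : Octo, oinner (φ x) (φ y) = oinner x y := by
    intro x y
    rw [oinner_polar (φ x) (φ y), oinner_polar x y, ← map_add,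
      (key (x+y)).2, (key x).2, (key y).2]
  refine ⟨hinner, ?_, ?_⟩
  · intro x hx
    rw [isIm_iff] at hx ⊢
    rw [(key x).1, hx]
  · intro a b c _ _ _
    have hcomm : φ (comm a b) = comm (φ a) (φ b) := by
      rw [Octo.comm, Octo.comm, map_sub, hmul, hmul]
    rw [lam, lam, ← hcomm, hinner]

end
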